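/- Let S_n = ∑_{k=0}^n C(n+k,2k)·Cat(k), where Cat(k) is the k-th Catalan number (these are the large Schröder numbers). Then the generating function g(x)=∑ S_n x^n satisfies the algebraic equation βx·g(x)^2 - (1-αx)g(x) + 1 = 0 with α=β=1, i.e., x g(x)^2 - (1-x) g(x) + 1 = 0. -/

import Mathlib

open Finset PowerSeries Finset.Nat

noncomputable def Jser (d : ℕ) : PowerSeries ℤ := ((invOneSubPow ℤ d : (PowerSeries ℤ)ˣ) : PowerSeries ℤ)

lemma Jser_mul (c d : ℕ) : Jser c * Jser d = Jser (c + d) := by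
  unfold Jser
  rw [← Units.val_mul]
  congr 1
  rw [invOneSubPow_eq_inv_one_sub_pow, invOneSubPow_eq_inv_one_sub_pow,
    invOneSubPow_eq_inv_one_sub_pow, ← pow_add]

lemma coeff_X_pow_mul_Jser (s r n : ℕ) :
    PowerSeries.coeff n (PowerSeries.X ^ s * Jser (r + 1)) =
      if s ≤ n then (((r + (n - s)).choose r : ℕ) : ℤ) else 0 := by
  rw [PowerSeries.coeff_X_pow_mul']
  unfold Jser
  rw [invOneSubPow_val_succ_eq_mk_add_choose]
  split_ifs with h
  · simp
  · rfl

lemma vandermonde_shift (m a b : ℕ) :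
    ∑ p ∈ antidiagonal m, (((p.1 + a).choose (2 * a) : ℕ) : ℤ) * (((p.2 + b).choose (2 * b) : ℕ) : ℤ)
      = (((m + a + b + 1).choose (2 * a + 2 * b + 1) : ℕ) : ℤ) := by
  have h1 : ∀ (c i : ℕ), PowerSeries.coeff i (PowerSeries.X ^ c * Jser (2 * c + 1))
      = (((i + c).choose (2 * c) : ℕ) : ℤ) := by
    intro c i
    rw [coeff_X_pow_mul_Jser]
    split_ifs with h
    · congr 2
      omega
    · rw [Nat.choose_eq_zero_of_lt (by omega), Nat.cast_zero]
  have e : (PowerSeries.X ^ a * Jser (2 * a + 1)) * (PowerSeries.X ^ b * Jser (2 * b + 1))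
      = PowerSeries.X ^ (a + b) * Jser ((2 * a + 2 * b + 1) + 1) := by
    have h3 : 2 * a + 1 + (2 * b + 1) = 2 * a + 2 * b + 1 + 1 := by ring
    rw [mul_mul_mul_comm, ← pow_add, Jser_mul, h3]
  have h2 : PowerSeries.coeff m
      ((PowerSeries.X ^ a * Jser (2 * a + 1)) * (PowerSeries.X ^ b * Jser (2 * b + 1)))
      = ∑ p ∈ antidiagonal m, (((p.1 + a).choose (2 * a) : ℕ) : ℤ) * (((p.2 + b).choose (2 * b) : ℕ) : ℤ) := by
    rw [PowerSeries.coeff_mul]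
    exact Finset.sum_congr rfl fun p _ => by rw [h1, h1]
  rw [← h2, e, coeff_X_pow_mul_Jser]
  split_ifs with h
  · congr 2
    omega
  · rw [Nat.choose_eq_zero_of_lt (by omega), Nat.cast_zero]

def Snat (n : ℕ) : ℕ := ∑ k ∈ range (n + 1), (n + k).choose (2 * k) * catalan k

lemma Snat_succ (m : ℕ) :
    Snat (m + 1) = Snat m + ∑ t ∈ range (m + 1), (m + t + 1).choose (2 * t + 1) * catalan (t + 1) := by
  have hf : ∀ t : ℕ, (m + 1 + (t + 1)).choose (2 * (t + 1))
      = (m + t + 1).choose (2 * t + 1) + (m + t + 1).choose (2 * t + 2) := by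
    intro t
    have e1 : m + 1 + (t + 1) = (m + t + 1) + 1 := by ring
    have e2 : 2 * (t + 1) = (2 * t + 1) + 1 := by ring
    rw [e1, e2, Nat.choose_succ_succ']
  have hS1 : Snat (m + 1) = 1 + ∑ t ∈ range (m + 1),
      ((m + t + 1).choose (2 * t + 1) * catalan (t + 1)
        + (m + t + 1).choose (2 * t + 2) * catalan (t + 1)) := by
    rw [Snat, Finset.sum_range_succ']
    simp only [hf, add_mul, Nat.add_zero, Nat.mul_zero, Nat.choose_zero_right, catalan_zero,
      mul_one, one_mul]
    ring
  have hS0 : Snat m = 1 + ∑ t ∈ range (m + 1), (m + t + 1).choose (2 * t + 2) * catalan (t + 1) := by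
    rw [Snat, Finset.sum_range_succ', Finset.sum_range_succ]
    have hz : (m + m + 1).choose (2 * m + 2) = 0 := Nat.choose_eq_zero_of_lt (by omega)
    have hf2 : ∀ t : ℕ, (m + (t + 1)).choose (2 * (t + 1)) = (m + t + 1).choose (2 * t + 2) := by
      intro t
      congr 1
    simp only [hf2, hz, Nat.add_zero, Nat.mul_zero, Nat.choose_zero_right, catalan_zero,
      mul_one, one_mul, zero_mul, add_zero]
    ring
  rw [hS1, hS0, Finset.sum_add_distrib]
  ring

lemma schroder_key (m : ℕ) :
    ∑ p ∈ antidiagonal m, ((Snat p.1 : ℤ) * (Snat p.2 : ℤ)) + (Snat m : ℤ) = (Snat (m + 1) : ℤ) := by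
  set R := range (m + 1) with hR
  have hS : ∀ i ∈ R, (Snat i : ℤ) = ∑ a ∈ R, (((i + a).choose (2 * a) : ℕ) : ℤ) * (catalan a : ℤ) := by
    intro i hi
    rw [Snat]
    push_cast
    apply Finset.sum_subset
    · intro x hx
      simp only [hR, mem_range] at *
      omega
    · intro x hx hnx
      simp only [hR, mem_range] at hx hnx
      rw [Nat.choose_eq_zero_of_lt (by omega)]
      push_cast
      ring
  have hprod : ∑ p ∈ antidiagonal m, ((Snat p.1 : ℤ) * (Snat p.2 : ℤ))
      = ∑ a ∈ R, ∑ b ∈ R, ((catalan a : ℤ) * (catalan b : ℤ))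
          * (((m + a + b + 1).choose (2 * a + 2 * b + 1) : ℕ) : ℤ) := by
    calc ∑ p ∈ antidiagonal m, ((Snat p.1 : ℤ) * (Snat p.2 : ℤ))
        = ∑ p ∈ antidiagonal m, ∑ a ∈ R, ∑ b ∈ R, ((catalan a : ℤ) * (catalan b : ℤ))
            * ((((p.1 + a).choose (2 * a) : ℕ) : ℤ) * (((p.2 + b).choose (2 * b) : ℕ) : ℤ)) := by
          refine Finset.sum_congr rfl fun p hp => ?_
          have hp' := mem_antidiagonal.mp hp
          rw [hS p.1 (by simp only [hR, mem_range]; omega),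
            hS p.2 (by simp only [hR, mem_range]; omega), Finset.sum_mul_sum]
          exact Finset.sum_congr rfl fun a _ => Finset.sum_congr rfl fun b _ => by ring
      _ = ∑ a ∈ R, ∑ b ∈ R, ∑ p ∈ antidiagonal m, ((catalan a : ℤ) * (catalan b : ℤ))
            * ((((p.1 + a).choose (2 * a) : ℕ) : ℤ) * (((p.2 + b).choose (2 * b) : ℕ) : ℤ)) := by
          rw [Finset.sum_comm]
          exact Finset.sum_congr rfl fun a _ => Finset.sum_comm
      _ = ∑ a ∈ R, ∑ b ∈ R, ((catalan a : ℤ) * (catalan b : ℤ))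
            * (((m + a + b + 1).choose (2 * a + 2 * b + 1) : ℕ) : ℤ) := by
          refine Finset.sum_congr rfl fun a _ => Finset.sum_congr rfl fun b _ => ?_
          rw [← Finset.mul_sum, vandermonde_shift]
  have htri : ∑ a ∈ R, ∑ b ∈ R, ((catalan a : ℤ) * (catalan b : ℤ))
        * (((m + a + b + 1).choose (2 * a + 2 * b + 1) : ℕ) : ℤ)
      = ∑ t ∈ R, (((m + t + 1).choose (2 * t + 1) : ℕ) : ℤ) * (catalan (t + 1) : ℤ) := by
    set F : ℕ × ℕ → ℤ := fun q => ((catalan q.1 : ℤ) * (catalan q.2 : ℤ))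
        * (((m + q.1 + q.2 + 1).choose (2 * q.1 + 2 * q.2 + 1) : ℕ) : ℤ) with hF
    have hL : ∑ a ∈ R, ∑ b ∈ R, ((catalan a : ℤ) * (catalan b : ℤ))
        * (((m + a + b + 1).choose (2 * a + 2 * b + 1) : ℕ) : ℤ) = ∑ q ∈ R ×ˢ R, F q := by
      rw [Finset.sum_product]
    have hRt : ∑ t ∈ R, (((m + t + 1).choose (2 * t + 1) : ℕ) : ℤ) * (catalan (t + 1) : ℤ)
        = ∑ t ∈ R, ∑ q ∈ antidiagonal t, F q := by
      refine Finset.sum_congr rfl fun t _ => ?_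
      rw [catalan_succ' t]
      push_cast
      rw [Finset.mul_sum]
      refine Finset.sum_congr rfl fun q hq => ?_
      have hq' := mem_antidiagonal.mp hq
      simp only [hF]
      rw [show m + q.1 + q.2 + 1 = m + t + 1 by omega, show 2 * q.1 + 2 * q.2 + 1 = 2 * t + 1 by omega]
      ring
    have hdis : (↑R : Set ℕ).PairwiseDisjoint (fun t => antidiagonal t) := by
      intro x _ y _ hxy
      simp only [Function.onFun, Finset.disjoint_left]
      intro q hqx hqy
      exact hxy (by rw [← mem_antidiagonal.mp hqx, ← mem_antidiagonal.mp hqy])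
    have hb : ∑ t ∈ R, ∑ q ∈ antidiagonal t, F q = ∑ q ∈ R.biUnion (fun t => antidiagonal t), F q :=
      (Finset.sum_biUnion hdis).symm
    have hsub : R.biUnion (fun t => antidiagonal t) ⊆ R ×ˢ R := by
      intro q hq
      simp only [hR, mem_biUnion, Finset.HasAntidiagonal.mem_antidiagonal, mem_range, mem_product] at *
      obtain ⟨t, ht, hqt⟩ := hq
      omega
    have hz : ∀ q ∈ R ×ˢ R, q ∉ R.biUnion (fun t => antidiagonal t) → F q = 0 := by
      intro q hq hnq
      have hgt : m < q.1 + q.2 := by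
        by_contra hle
        exact hnq (by
          simp only [hR, mem_biUnion, Finset.HasAntidiagonal.mem_antidiagonal, mem_range]
          exact ⟨q.1 + q.2, by omega, rfl⟩)
      simp only [hF]
      rw [Nat.choose_eq_zero_of_lt (by omega)]
      push_cast
      ring
    rw [hL, hRt, hb, Finset.sum_subset hsub hz]
  rw [hprod, htri]
  have := Snat_succ m
  push_cast [this]
  ring

noncomputable def gS : PowerSeries ℤ := PowerSeries.mk fun n => (Snat n : ℤ)

lemma schroder_main : PowerSeries.X * gS ^ 2 - (1 - PowerSeries.X) * gS + 1 = 0 := by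
  ext n
  rw [map_add, map_sub, map_zero]
  rcases n with _ | m
  · rw [PowerSeries.coeff_zero_eq_constantCoeff]
    simp [gS, Snat, map_mul, map_pow]
  · have h1 : PowerSeries.coeff (m + 1) (PowerSeries.X * gS ^ 2)
        = ∑ p ∈ antidiagonal m, (Snat p.1 : ℤ) * (Snat p.2 : ℤ) := by
      rw [PowerSeries.coeff_succ_X_mul, sq, PowerSeries.coeff_mul]
      exact Finset.sum_congr rfl fun p _ => by simp [gS]
    have h2 : PowerSeries.coeff (m + 1) ((1 - PowerSeries.X) * gS)
        = (Snat (m + 1) : ℤ) - (Snat m : ℤ) := by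
      rw [sub_mul, one_mul, map_sub, PowerSeries.coeff_succ_X_mul]
      simp [gS]
    have h3 : PowerSeries.coeff (m + 1) (1 : PowerSeries ℤ) = 0 := by
      rw [PowerSeries.coeff_one]
      simp
    rw [h1, h2, h3]
    have := schroder_key m
    linarith

/-- The generating function `g` of the large Schröder numbers
`S_n = ∑_{k=0}^n C(n+k,2k)·Cat(k)` satisfies `x g² - (1-x) g + 1 = 0`. -/
theorem schroder_gf_quadratic :
    let g : PowerSeries ℤ := PowerSeries.mk fun n =>
      ((∑ k ∈ Finset.range (n + 1), (n + k).choose (2 * k) * catalan k : ℕ) : ℤ)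
    PowerSeries.X * g ^ 2 - (1 - PowerSeries.X) * g + 1 = 0 := by
  intro g
  exact schroder_main
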